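/- Suppose ρ > 0 and E₀ > 0 are real numbers satisfying E₀ = 2·exp( ρ·E₀² / (1 + ρ·E₀) ) − 1 and 1 = 2·exp( ρ·E₀² / (1 + ρ·E₀) ) · ρ·E₀·(2 + ρ·E₀) / (1 + ρ·E₀)². Then ρ·E₀²·(2 + ρ·E₀) = 1, ρ = (√(1 + 1/E₀) − 1)/E₀, and E₀ + 1 = 2·exp( 1 / (1 + 1/E₀ + √(1 + 1/E₀)) ). -/

import Mathlib

/-- The characteristic system for the singularity of the SP-network generating
function `E(x)` at `x = ρ`, `E₀ = E(ρ)`, implies `ρ·E₀²·(2+ρ·E₀) = 1`,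
`ρ = (√(1+1/E₀) − 1)/E₀` and `E₀ + 1 = 2·exp(1/(1 + 1/E₀ + √(1+1/E₀)))`. -/
theorem sp_network_singular_system (ρ E₀ : ℝ) (hρ : 0 < ρ) (hE : 0 < E₀)
    (h1 : E₀ = 2 * Real.exp (ρ * E₀ ^ 2 / (1 + ρ * E₀)) - 1)
    (h2 : 1 = 2 * Real.exp (ρ * E₀ ^ 2 / (1 + ρ * E₀)) *
      (ρ * E₀ * (2 + ρ * E₀) / (1 + ρ * E₀) ^ 2)) :
    ρ * E₀ ^ 2 * (2 + ρ * E₀) = 1 ∧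
    ρ = (Real.sqrt (1 + 1 / E₀) - 1) / E₀ ∧
    E₀ + 1 = 2 * Real.exp (1 / (1 + 1 / E₀ + Real.sqrt (1 + 1 / E₀))) := by
  have hd : (0:ℝ) < 1 + ρ * E₀ := by positivity
  have h2A : 2 * Real.exp (ρ * E₀ ^ 2 / (1 + ρ * E₀)) = E₀ + 1 := by linarith
  rw [h2A] at h2
  have hd' : (1 + ρ * E₀) ^ 2 ≠ 0 := by positivity
  have key : (1 + ρ * E₀) ^ 2 = (E₀ + 1) * (ρ * E₀ * (2 + ρ * E₀)) := by
    field_simp at h2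
    linarith
  have fact1 : ρ * E₀ ^ 2 * (2 + ρ * E₀) = 1 := by linear_combination -key
  have hE' : E₀ ≠ 0 := ne_of_gt hE
  have hsq : (1 + ρ * E₀) ^ 2 = 1 + 1 / E₀ := by
    field_simp
    linear_combination key + 2*fact1
  have ht : Real.sqrt (1 + 1 / E₀) = 1 + ρ * E₀ := by
    rw [← hsq]
    exact Real.sqrt_sq hd.le
  refine ⟨fact1, ?_, ?_⟩
  · rw [ht]
    field_simp
    ring
  · rw [← h2A]
    congr 1
    rw [ht]
    congr 1
    have h3 : (0:ℝ) < 1 + 1 / E₀ + (1 + ρ * E₀) := by positivity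
    field_simp
    linear_combination fact1
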